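/- Let G be a finite weighted graph partitioned into subgraphs {G_i} with boundary sets {B_i}. If all non-boundary vertices are contracted (iteratively removed, while inserting shortcuts that preserve pairwise distances among remaining neighbors), then for every partition G_i and every pair of boundary vertices s, t ∈ B_i, the distance from s to t in the resulting overlay graph (consisting of boundary vertices, original inter-partition edges, and generated shortcuts) equals d_G(s,t). -/

import Mathlib

open scoped ENNReal

/-- Cost of the walk `s :: p ++ [t]`: `p` is the list of intermediate vertices, a missing
edge has weight `⊤`. -/
noncomputable def pathCost {V : Type*} (w : V → V → ℝ≥0∞) : V → List V → V → ℝ≥0∞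
  | s, [], t => w s t
  | s, x :: xs, t => w s x + pathCost w x xs t

/-- Shortest-path distance induced by the weight function `w`. -/
noncomputable def gdist {V : Type*} [DecidableEq V] (w : V → V → ℝ≥0∞) (s t : V) : ℝ≥0∞ :=
  if s = t then 0 else ⨅ p : List V, pathCost w s p t

/-- Contraction of vertex `v`: for each pair of vertices `u, x ≠ v`, the new weight of
edge `(u,x)` is `min (w u x) (w u v + w v x)`; `v` and its incident edges are removed. -/
noncomputable def contractVtx {V : Type*} [DecidableEq V] (w : V → V → ℝ≥0∞) (v : V) :
    V → V → ℝ≥0∞ :=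
  fun u x => if u = v ∨ x = v then ⊤ else min (w u x) (w u v + w v x)

section Aux
variable {V : Type*} [DecidableEq V]

lemma contractVtx_eq (w : V → V → ℝ≥0∞) (v : V) {u x : V} (hu : u ≠ v) (hx : x ≠ v) :
    contractVtx w v u x = min (w u x) (w u v + w v x) := by
  simp [contractVtx, hu, hx]

lemma pathCost_contract_filter (w : V → V → ℝ≥0∞) (v t : V) (ht : t ≠ v) (p : List V) :
    (∀ s, s ≠ v → pathCost (contractVtx w v) s (p.filter (· ≠ v)) t ≤ pathCost w s p t) ∧
    (∀ s, s ≠ v →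
      pathCost (contractVtx w v) s (p.filter (· ≠ v)) t ≤ w s v + pathCost w v p t) := by
  induction p with
  | nil =>
    refine ⟨fun s hs => ?_, fun s hs => ?_⟩
    · simpa [pathCost, contractVtx_eq w v hs ht] using min_le_left _ _
    · simpa [pathCost, contractVtx_eq w v hs ht] using min_le_right _ _
  | cons x xs ih =>
    refine ⟨fun s hs => ?_, fun s hs => ?_⟩
    · by_cases hx : x = v
      · rw [hx, List.filter_cons_of_neg (by simp)]
        calc pathCost (contractVtx w v) s (List.filter (fun x => decide (x ≠ v)) xs) t
            ≤ w s v + pathCost w v xs t := ih.2 s hs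
          _ = pathCost w s (v :: xs) t := by simp [pathCost]
      · rw [List.filter_cons_of_pos (by simp [hx])]
        simp only [pathCost]
        gcongr
        · exact (contractVtx_eq w v hs hx).le.trans (min_le_left _ _)
        · exact ih.1 x hx
    · by_cases hx : x = v
      · rw [hx, List.filter_cons_of_neg (by simp)]
        calc pathCost (contractVtx w v) s (List.filter (fun x => decide (x ≠ v)) xs) t
            ≤ w s v + pathCost w v xs t := ih.2 s hs
          _ ≤ w s v + (w v v + pathCost w v xs t) := by gcongr; exact le_add_self
          _ = w s v + pathCost w v (v :: xs) t := by simp [pathCost]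
      · rw [List.filter_cons_of_pos (by simp [hx])]
        simp only [pathCost]
        calc contractVtx w v s x + pathCost (contractVtx w v) x (List.filter _ xs) t
            ≤ (w s v + w v x) + pathCost w x xs t := by
              gcongr
              · exact (contractVtx_eq w v hs hx).le.trans (min_le_right _ _)
              · exact ih.1 x hx
          _ = w s v + (w v x + pathCost w x xs t) := by ring
          _ = w s v + pathCost w v (x :: xs) t := by simp [pathCost]

lemma pathCost_contract_top (w : V → V → ℝ≥0∞) (v t : V) :
    ∀ (p : List V) (s : V), v ∈ p → pathCost (contractVtx w v) s p t = ⊤ := by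
  intro p
  induction p with
  | nil => simp
  | cons x xs ih =>
    intro s hv
    rcases List.mem_cons.mp hv with h | h
    · subst h
      simp [pathCost, contractVtx]
    · simp [pathCost, ih _ h]

lemma exists_pathCost_le (w : V → V → ℝ≥0∞) (v t : V) (ht : t ≠ v) :
    ∀ (p : List V) (s : V), s ≠ v → v ∉ p →
      ∃ q, pathCost w s q t ≤ pathCost (contractVtx w v) s p t := by
  intro p
  induction p with
  | nil =>
    intro s hs _
    rcases min_cases (w s t) (w s v + w v t) with ⟨h, _⟩ | ⟨h, _⟩
    · exact ⟨[], by simp [pathCost, contractVtx_eq w v hs ht, h]⟩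
    · exact ⟨[v], by simp [pathCost, contractVtx_eq w v hs ht, h]⟩
  | cons x xs ih =>
    intro s hs hv
    have hx : x ≠ v := fun h => hv (h ▸ List.mem_cons_self)
    have hxs : v ∉ xs := fun h => hv (List.mem_cons_of_mem _ h)
    obtain ⟨q, hq⟩ := ih x hx hxs
    rcases min_cases (w s x) (w s v + w v x) with ⟨h, _⟩ | ⟨h, _⟩
    · refine ⟨x :: q, ?_⟩
      simp only [pathCost, contractVtx_eq w v hs hx, h]
      gcongr
    · refine ⟨v :: x :: q, ?_⟩
      simp only [pathCost, contractVtx_eq w v hs hx, h, ← add_assoc]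
      gcongr

lemma gdist_contract (w : V → V → ℝ≥0∞) (v s t : V) (hs : s ≠ v) (ht : t ≠ v) :
    gdist (contractVtx w v) s t = gdist w s t := by
  unfold gdist
  split
  · rfl
  · refine le_antisymm (le_iInf fun p => ?_) (le_iInf fun p => ?_)
    · exact (iInf_le (fun q => pathCost (contractVtx w v) s q t) (p.filter (· ≠ v))).trans
        ((pathCost_contract_filter w v t ht p).1 s hs)
    · by_cases hv : v ∈ p
      · simp [pathCost_contract_top w v t p s hv]
      · obtain ⟨q, hq⟩ := exists_pathCost_le w v t ht p s hs hv
        exact (iInf_le (fun q => pathCost w s q t) q).trans hq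

lemma gdist_foldl (s t : V) :
    ∀ (order : List V) (w : V → V → ℝ≥0∞), s ∉ order → t ∉ order →
      gdist (order.foldl contractVtx w) s t = gdist w s t := by
  intro order
  induction order with
  | nil => intro w _ _; rfl
  | cons v rest ih =>
    intro w hs ht
    rw [List.foldl_cons,
      ih (contractVtx w v) (fun h => hs (List.mem_cons_of_mem _ h))
        (fun h => ht (List.mem_cons_of_mem _ h)),
      gdist_contract w v s t (fun h => hs (h ▸ List.mem_cons_self))
        (fun h => ht (h ▸ List.mem_cons_self))]

end Aux

/-- Overlay distance preservation: if all non-boundary vertices of a partitioned graph are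
iteratively contracted (inserting distance-preserving shortcuts), then for every partition
`G_i` and every pair of boundary vertices `s, t ∈ B_i`, the distance in the resulting
overlay graph (boundary vertices, original inter-partition edges, and generated shortcuts)
equals `d_G(s,t)`. -/


theorem overlay_graph_preserves_boundary_distances
    {V : Type*} [Fintype V] [DecidableEq V] {k : ℕ}
    (part : V → Fin k) (B : Finset V) (w : V → V → ℝ≥0∞)
    (hsymm : ∀ u x, w u x = w x u)
    (hpos : ∀ u x, u ≠ x → 0 < w u x)
    -- boundary vertices are exactly the vertices incident to inter-partition edges
    (hB : ∀ v, v ∈ B ↔ ∃ u, part u ≠ part v ∧ w v u ≠ ⊤)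
    (order : List V) (hnodup : order.Nodup)
    -- the contraction order consists of exactly the non-boundary vertices
    (horder : ∀ v, v ∈ order ↔ v ∉ B) :
    ∀ s ∈ B, ∀ t ∈ B, part s = part t →
      gdist (order.foldl contractVtx w) s t = gdist w s t := by
  intro s hsB t htB _
  exact gdist_foldl s t order w (fun h => (horder s).mp h hsB) (fun h => (horder t).mp h htB)
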